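/- Let m ≥ 1 and let X : ℝ^m → ℝ^m be a C¹ vector field such that ∫_{ℝ^m} ‖X(x)‖ dx < ∞ and ∫_{ℝ^m} |div X(x)| dx < ∞, where div X = ∑_{i=1}^m ∂X_i/∂x_i. Then ∫_{ℝ^m} div X(x) dx = 0. -/

import Mathlib

open MeasureTheory Set Filter Topology

private theorem gaffney_pi (n : ℕ) (f : (Fin (n+1) → ℝ) → (Fin (n+1) → ℝ))
    (hf : ContDiff ℝ 1 f)
    (hfi : Integrable (fun x => ‖f x‖))
    (hdiv : Integrable (fun x => ∑ i, fderiv ℝ f x (Pi.single i 1) i)) :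
    ∫ x, ∑ i, fderiv ℝ f x (Pi.single i 1) i = 0 := by
  classical
  set dv : (Fin (n+1) → ℝ) → ℝ := fun x => ∑ i, fderiv ℝ f x (Pi.single i 1) i with hdv
  have hcontf : Continuous f := hf.continuous
  have hcontd : Continuous dv := by
    apply continuous_finset_sum
    intro i _
    exact (continuous_apply i).comp
      ((hf.continuous_fderiv one_ne_zero).clm_apply continuous_const)
  -- the indicator functions on products
  set S : Set (ℝ × (Fin n → ℝ)) := {p | ∀ j, |p.2 j| ≤ |p.1|} with hS
  have hSclosed : IsClosed S := by
    have : S = ⋂ j, {p : ℝ × (Fin n → ℝ) | |p.2 j| ≤ |p.1|} := by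
      ext p; simp [hS]
    rw [this]
    exact isClosed_iInter fun j => isClosed_le
      (continuous_abs.comp ((continuous_apply j).comp continuous_snd))
      (continuous_abs.comp continuous_fst)
  set F : Fin (n+1) → ℝ × (Fin n → ℝ) → ℝ :=
    fun i p => S.indicator (fun p => ‖f (Fin.insertNth i p.1 p.2)‖) p with hF
  have hinsert : ∀ i : Fin (n+1), Continuous fun p : ℝ × (Fin n → ℝ) =>
      (Fin.insertNth i p.1 p.2 : Fin (n+1) → ℝ) := by
    intro i
    exact Continuous.finInsertNth (A := fun _ : Fin (n+1) => ℝ) i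
      (continuous_fst : Continuous fun p : ℝ × (Fin n → ℝ) => p.1) continuous_snd
  have hFint : ∀ i, Integrable (F i) := by
    intro i
    have hg : Integrable (fun p : ℝ × (Fin n → ℝ) => ‖f (Fin.insertNth i p.1 p.2)‖) := by
      have h1 : Integrable ((fun x => ‖f x‖) ∘
          (MeasurableEquiv.piFinSuccAbove (fun _ : Fin (n+1) => ℝ) i).symm) :=
        (((volume_preserving_piFinSuccAbove (fun _ : Fin (n+1) => ℝ) i).symm).integrable_comp_emb
          (MeasurableEquiv.measurableEmbedding _)).mpr hfi
      have h2 : ∀ p : ℝ × (Fin n → ℝ),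
          ((fun x => ‖f x‖) ∘
            (MeasurableEquiv.piFinSuccAbove (fun _ : Fin (n+1) => ℝ) i).symm) p =
          ‖f (Fin.insertNth i p.1 p.2)‖ := by
        intro p
        simp [Function.comp_def, MeasurableEquiv.piFinSuccAbove, Fin.insertNthEquiv]
      exact h1.congr (Filter.Eventually.of_forall h2)
    refine hg.mono' ?_ ?_
    · exact ((continuous_norm.comp (hcontf.comp (hinsert i))).aestronglyMeasurable).indicator
        hSclosed.measurableSet
    · refine Eventually.of_forall fun p => ?_
      rw [Real.norm_eq_abs, abs_of_nonneg (Set.indicator_nonneg (fun _ _ => norm_nonneg _) _)]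
      exact Set.indicator_le_self' (fun _ _ => norm_nonneg _) p
  set ψ : Fin (n+1) → ℝ → ℝ := fun i t => ∫ y, F i (t, y) with hψ
  have hψnn : ∀ i t, 0 ≤ ψ i t := fun i t =>
    integral_nonneg fun y => Set.indicator_nonneg (fun _ _ => norm_nonneg _) _
  have hψint : ∀ i, Integrable (ψ i) := by
    intro i
    have : Integrable (F i) (volume.prod volume) := hFint i
    exact this.integral_prod_left
  -- relating ψ to face integrals
  have hψface : ∀ (i : Fin (n+1)) (t R : ℝ), 0 < R → |t| = R →
      (∫ y in Icc (fun _ => -R) (fun _ : Fin n => R), ‖f (Fin.insertNth i t y)‖) = ψ i t := by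
    intro i t R hR ht
    have hset : Icc (fun _ => -R) (fun _ : Fin n => R) = {y : Fin n → ℝ | ∀ j, |y j| ≤ |t|} := by
      ext y
      simp only [mem_Icc, Pi.le_def, mem_setOf_eq, ht, abs_le]
      constructor
      · intro h j; exact ⟨h.1 j, h.2 j⟩
      · intro h; exact ⟨fun j => (h j).1, fun j => (h j).2⟩
    have hmeas : MeasurableSet {y : Fin n → ℝ | ∀ j, |y j| ≤ |t|} := by
      rw [← hset]; exact measurableSet_Icc
    rw [hset, hψ]
    have heq : ∀ y : Fin n → ℝ, F i (t, y) =
        Set.indicator {y : Fin n → ℝ | ∀ j, |y j| ≤ |t|}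
          (fun y => ‖f (Fin.insertNth i t y)‖) y := by
      intro y
      simp only [hF, hS, Set.indicator_apply, Set.mem_setOf_eq]
    simp only [heq]
    rw [integral_indicator hmeas]
  set H : ℝ → ℝ := fun R => ∑ i, (ψ i R + ψ i (-R)) with hH
  have hHnn : ∀ R, 0 ≤ H R := fun R =>
    Finset.sum_nonneg fun i _ => add_nonneg (hψnn i R) (hψnn i (-R))
  have hHint : Integrable H :=
    integrable_finset_sum _ fun i _ => (hψint i).add ((hψint i).comp_neg)
  -- divergence theorem on cubes
  have hdivthm : ∀ R : ℝ, 0 < R →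
      (∫ x in Icc (fun _ => -R) (fun _ : Fin (n+1) => R), dv x) =
        ∑ i : Fin (n+1),
          ((∫ y in Icc (fun _ => -R) (fun _ : Fin n => R), f (Fin.insertNth i R y) i) -
           ∫ y in Icc (fun _ => -R) (fun _ : Fin n => R), f (Fin.insertNth i (-R) y) i) := by
    intro R hR
    have hle : (fun _ : Fin (n+1) => -R) ≤ fun _ => R :=
      fun _ => by simpa using neg_le_self hR.le
    have := integral_divergence_of_hasFDerivAt_off_countable
      (a := fun _ => -R) (b := fun _ => R) hle f (fderiv ℝ f) ∅ countable_empty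
      hcontf.continuousOn
      (fun x _ => (hf.differentiable one_ne_zero x).hasFDerivAt)
      hdiv.integrableOn
    simpa [Function.comp_def] using this
  -- bounding the flux
  have hface : ∀ (i : Fin (n+1)) (t R : ℝ), 0 < R → |t| = R →
      |∫ y in Icc (fun _ => -R) (fun _ : Fin n => R), f (Fin.insertNth i t y) i| ≤ ψ i t := by
    intro i t R hR ht
    have hcomp : IsCompact (Icc (fun _ => -R) (fun _ : Fin n => R)) := isCompact_Icc
    have hc1 : ContinuousOn (fun y => f (Fin.insertNth i t y) i)
        (Icc (fun _ => -R) (fun _ : Fin n => R)) := by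
      apply Continuous.continuousOn
      exact (continuous_apply i).comp (hcontf.comp ((hinsert i).comp
        (Continuous.prodMk_right t)))
    have hc2 : ContinuousOn (fun y => ‖f (Fin.insertNth i t y)‖)
        (Icc (fun _ => -R) (fun _ : Fin n => R)) := by
      apply Continuous.continuousOn
      exact continuous_norm.comp (hcontf.comp ((hinsert i).comp
        (Continuous.prodMk_right t)))
    rw [← Real.norm_eq_abs]
    calc ‖∫ y in Icc (fun _ => -R) (fun _ : Fin n => R), f (Fin.insertNth i t y) i‖
        ≤ ∫ y in Icc (fun _ => -R) (fun _ : Fin n => R), ‖f (Fin.insertNth i t y) i‖ :=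
          norm_integral_le_integral_norm _
      _ ≤ ∫ y in Icc (fun _ => -R) (fun _ : Fin n => R), ‖f (Fin.insertNth i t y)‖ := by
          apply setIntegral_mono_on
            ((hc1.norm).integrableOn_compact hcomp)
            (hc2.integrableOn_compact hcomp) measurableSet_Icc
          intro y _
          exact norm_le_pi_norm _ i
      _ = ψ i t := hψface i t R hR ht
  have hflux : ∀ R : ℝ, 0 < R →
      |∫ x in Icc (fun _ => -R) (fun _ : Fin (n+1) => R), dv x| ≤ H R := by
    intro R hR
    rw [hdivthm R hR]
    calc |∑ i : Fin (n+1),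
          ((∫ y in Icc (fun _ => -R) (fun _ : Fin n => R), f (Fin.insertNth i R y) i) -
           ∫ y in Icc (fun _ => -R) (fun _ : Fin n => R), f (Fin.insertNth i (-R) y) i)|
        ≤ ∑ i : Fin (n+1),
          |(∫ y in Icc (fun _ => -R) (fun _ : Fin n => R), f (Fin.insertNth i R y) i) -
           ∫ y in Icc (fun _ => -R) (fun _ : Fin n => R), f (Fin.insertNth i (-R) y) i| :=
          Finset.abs_sum_le_sum_abs _ _
      _ ≤ H R := by
          apply Finset.sum_le_sum
          intro i _
          have h1 := hface i R R hR (abs_of_pos hR)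
          have h2 := hface i (-R) R hR (by rw [abs_neg, abs_of_pos hR])
          calc |(∫ y in Icc (fun _ => -R) (fun _ : Fin n => R), f (Fin.insertNth i R y) i) -
                ∫ y in Icc (fun _ => -R) (fun _ : Fin n => R), f (Fin.insertNth i (-R) y) i|
              ≤ |∫ y in Icc (fun _ => -R) (fun _ : Fin n => R), f (Fin.insertNth i R y) i| +
                |∫ y in Icc (fun _ => -R) (fun _ : Fin n => R), f (Fin.insertNth i (-R) y) i| :=
                abs_sub _ _
            _ ≤ ψ i R + ψ i (-R) := add_le_add h1 h2
  -- selecting good radii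
  have hsel : ∀ k : ℕ, ∃ R : ℝ, max 1 (k : ℝ) ≤ R ∧ H R ≤ 1 / (k + 1) := by
    intro k
    by_contra hcon
    push_neg at hcon
    have hint : Integrable (fun _ : ℝ => 1 / ((k : ℝ) + 1))
        (volume.restrict (Ici (max 1 (k : ℝ)))) := by
      refine (hHint.restrict).mono' aestronglyMeasurable_const ?_
      rw [ae_restrict_iff' measurableSet_Ici]
      refine Eventually.of_forall fun t ht => ?_
      have := hcon t ht
      rw [Real.norm_eq_abs, abs_of_pos (by positivity)]
      linarith
    rw [integrable_const_iff] at hint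
    rcases hint with h | h
    · have : (0:ℝ) < 1 / ((k:ℝ)+1) := by positivity
      rw [h] at this; exact lt_irrefl _ this
    · rw [isFiniteMeasure_restrict, Real.volume_Ici] at h
      exact h rfl
  choose R hR1 hR2 using hsel
  have hRpos : ∀ k, 0 < R k := fun k => lt_of_lt_of_le (by norm_num)
    (le_trans (le_max_left _ _) (hR1 k))
  have hRge : ∀ k : ℕ, (k : ℝ) ≤ R k := fun k => le_trans (le_max_right _ _) (hR1 k)
  have hH0 : Tendsto (fun k => H (R k)) atTop (𝓝 0) := by
    apply squeeze_zero (fun k => hHnn (R k)) (fun k => hR2 k)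
    exact tendsto_one_div_add_atTop_nhds_zero_nat
  -- the set integrals tend to 0
  have T2 : Tendsto (fun k => ∫ x in Icc (fun _ => -(R k)) (fun _ : Fin (n+1) => R k), dv x)
      atTop (𝓝 0) := by
    apply squeeze_zero_norm (fun k => ?_) hH0
    rw [Real.norm_eq_abs]
    exact hflux (R k) (hRpos k)
  -- the set integrals tend to the full integral
  have T1 : Tendsto (fun k => ∫ x in Icc (fun _ => -(R k)) (fun _ : Fin (n+1) => R k), dv x)
      atTop (𝓝 (∫ x, dv x)) := by
    have heq : ∀ k : ℕ, (∫ x in Icc (fun _ => -(R k)) (fun _ : Fin (n+1) => R k), dv x) =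
        ∫ x, Set.indicator (Icc (fun _ => -(R k)) (fun _ : Fin (n+1) => R k)) dv x :=
      fun k => (integral_indicator measurableSet_Icc).symm
    simp only [heq]
    apply tendsto_integral_of_dominated_convergence (fun x => |dv x|)
    · exact fun k => (hcontd.aestronglyMeasurable).indicator measurableSet_Icc
    · simpa using hdiv.abs
    · intro k
      refine Eventually.of_forall fun x => ?_
      rw [← Real.norm_eq_abs]
      exact norm_indicator_le_norm_self _ _
    · refine Eventually.of_forall fun x => ?_
      have : ∀ᶠ k : ℕ in atTop,
          Set.indicator (Icc (fun _ => -(R k)) (fun _ : Fin (n+1) => R k)) dv x = dv x := by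
        filter_upwards [eventually_ge_atTop ⌈‖x‖⌉₊] with k hk
        apply Set.indicator_of_mem
        refine ⟨fun j => ?_, fun j => ?_⟩
        · show -(R k) ≤ x j
          have h1 : |x j| ≤ R k := by
            calc |x j| = ‖x j‖ := rfl
              _ ≤ ‖x‖ := norm_le_pi_norm x j
              _ ≤ (⌈‖x‖⌉₊ : ℝ) := Nat.le_ceil _
              _ ≤ (k : ℝ) := by exact_mod_cast hk
              _ ≤ R k := hRge k
          linarith [abs_nonneg (x j), neg_abs_le (x j)]
        · show x j ≤ R k
          calc x j ≤ |x j| := le_abs_self _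
            _ = ‖x j‖ := rfl
            _ ≤ ‖x‖ := norm_le_pi_norm x j
            _ ≤ (⌈‖x‖⌉₊ : ℝ) := Nat.le_ceil _
            _ ≤ (k : ℝ) := by exact_mod_cast hk
            _ ≤ R k := hRge k
      exact Tendsto.congr' (by filter_upwards [this] with k hk using hk.symm) tendsto_const_nhds
  exact tendsto_nhds_unique T1 T2

/-- Gaffney's theorem on `ℝ^m`: if a `C¹` vector field `X` satisfies
`∫ ‖X‖ < ∞` and `∫ |div X| < ∞`, then `∫ div X = 0`. -/
theorem gaffney_euclidean
    (m : ℕ) (hm : 1 ≤ m)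
    (X : EuclideanSpace ℝ (Fin m) → EuclideanSpace ℝ (Fin m))
    (hX : ContDiff ℝ 1 X)
    (hXint : Integrable (fun x => ‖X x‖))
    (hdivint : Integrable (fun x => ∑ i : Fin m, fderiv ℝ X x (EuclideanSpace.single i 1) i)) :
    ∫ x, ∑ i : Fin m, fderiv ℝ X x (EuclideanSpace.single i 1) i = 0 := by
  obtain ⟨n, rfl⟩ : ∃ n, m = n + 1 := ⟨m - 1, (Nat.succ_pred_eq_of_pos hm).symm⟩
  set e : EuclideanSpace ℝ (Fin (n+1)) ≃L[ℝ] (Fin (n+1) → ℝ) :=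
    (EuclideanSpace.equiv (Fin (n+1)) ℝ) with he
  set me : EuclideanSpace ℝ (Fin (n+1)) ≃ᵐ (Fin (n+1) → ℝ) :=
    (MeasurableEquiv.toLp 2 (Fin (n+1) → ℝ)).symm with hme
  have hmp : MeasurePreserving me.symm volume volume :=
    (EuclideanSpace.volume_preserving_symm_measurableEquiv_toLp (Fin (n+1))).symm
  set f : (Fin (n+1) → ℝ) → (Fin (n+1) → ℝ) := fun x => e (X (e.symm x)) with hf
  have hfc : ContDiff ℝ 1 f :=
    (e.contDiff.comp hX).comp e.symm.contDiff
  have hmesymm : ∀ x : Fin (n+1) → ℝ, me.symm x = e.symm x := fun x => rfl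
  have hfd : ∀ (x : Fin (n+1) → ℝ) (i : Fin (n+1)),
      fderiv ℝ f x (Pi.single i 1) i = fderiv ℝ X (e.symm x) (EuclideanSpace.single i 1) i := by
    intro x i
    have hXd : HasFDerivAt X (fderiv ℝ X (e.symm x)) (e.symm x) :=
      (hX.differentiable one_ne_zero (e.symm x)).hasFDerivAt
    have hfd' : HasFDerivAt f
        ((e.toContinuousLinearMap.comp (fderiv ℝ X (e.symm x))).comp
          e.symm.toContinuousLinearMap) x :=
      (e.toContinuousLinearMap.hasFDerivAt.comp (e.symm x) hXd).comp x
        e.symm.toContinuousLinearMap.hasFDerivAt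
    rw [hfd'.fderiv]
    rfl
  have hdivf : ∀ x : Fin (n+1) → ℝ,
      (∑ i, fderiv ℝ f x (Pi.single i 1) i) =
        ∑ i, fderiv ℝ X (e.symm x) (EuclideanSpace.single i 1) i :=
    fun x => Finset.sum_congr rfl fun i _ => hfd x i
  have key : ∫ x, ∑ i, fderiv ℝ f x (Pi.single i 1) i = 0 := by
    apply gaffney_pi n f hfc
    · -- integrability of the norm
      have h1 : Integrable (fun x : Fin (n+1) → ℝ => ‖X (e.symm x)‖) :=
        (hmp.integrable_comp_emb me.symm.measurableEmbedding).mpr hXint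
      refine h1.mono' ?_ ?_
      · exact (continuous_norm.comp hfc.continuous).aestronglyMeasurable
      · refine Eventually.of_forall fun x => ?_
        rw [norm_norm]
        refine (pi_norm_le_iff_of_nonneg (norm_nonneg _)).mpr fun i => ?_
        calc ‖f x i‖ = ‖(X (e.symm x)) i‖ := rfl
          _ ≤ ‖X (e.symm x)‖ := by
              rw [EuclideanSpace.norm_eq]
              have : |(X (e.symm x)) i| = Real.sqrt ((X (e.symm x) i)^2) := by
                rw [Real.sqrt_sq_eq_abs]
              rw [Real.norm_eq_abs, this]
              apply Real.sqrt_le_sqrt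
              calc (X (e.symm x) i)^2 = |X (e.symm x) i|^2 := (sq_abs _).symm
                _ ≤ ∑ j, ‖X (e.symm x) j‖^2 := by
                    apply Finset.single_le_sum (f := fun j => ‖X (e.symm x) j‖^2)
                      (fun j _ => sq_nonneg _) (Finset.mem_univ i)
    · -- integrability of the divergence
      have h1 : Integrable (fun x : Fin (n+1) → ℝ =>
          ∑ i, fderiv ℝ X (e.symm x) (EuclideanSpace.single i 1) i) :=
        (hmp.integrable_comp_emb me.symm.measurableEmbedding).mpr hdivint
      exact h1.congr (Eventually.of_forall fun x => (hdivf x).symm)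
  rw [← key]
  rw [← hmp.integral_comp me.symm.measurableEmbedding]
  exact integral_congr_ae (Eventually.of_forall fun x => (hdivf x).symm)
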